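/- Let λ be a special symplectic partition of 2m. Then the set {j_min(Δ) : Δ an interval of λ} equals the set of indices j ≥ 1 such that j is odd, λ_j is even, and λ_{j-1} > λ_j (with λ_0 = ∞); and the set {j_max(Δ) : Δ a non-minimal interval of λ} equals the set of indices j ≥ 1 such that j is even, λ_j is even, and λ_j > λ_{j+1}. -/
import Mathlib


open Classical

noncomputable section

/-- A partition: weakly decreasing on indices `j ≥ 1` (parts are `l 1 ≥ l 2 ≥ ...`). -/
def IsPartition (l : ℕ → ℕ) : Prop := ∀ j, 1 ≤ j → l (j + 1) ≤ l j

/-- The parts vanish eventually (finitely many nonzero parts). -/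
def EventuallyZero (l : ℕ → ℕ) : Prop := ∃ N, ∀ j, N ≤ j → l j = 0

/-- Multiplicity of `i` as a part of `l`. -/
def mult (l : ℕ → ℕ) (i : ℕ) : ℕ := Nat.card {j : ℕ | 1 ≤ j ∧ l j = i}

/-- The sum of the parts of `l`. -/
def psum (l : ℕ → ℕ) : ℕ := ∑ᶠ j : ℕ, l (j + 1)

/-- Symplectic: every odd part occurs with even multiplicity. -/
def IsSymplectic (l : ℕ → ℕ) : Prop := ∀ i, Odd i → Even (mult l i)

/-- Orthogonal: every even positive part occurs with even multiplicity. -/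
def IsOrthogonal (l : ℕ → ℕ) : Prop := ∀ i, 0 < i → Even i → Even (mult l i)

/-- Special: `l (2j-1)` and `l (2j)` have the same parity for all `j ≥ 1`. -/
def IsSpecial (l : ℕ → ℕ) : Prop := ∀ j, 1 ≤ j → l (2 * j - 1) % 2 = l (2 * j) % 2

/-- `P^+(λ)`: odd `j` with `λ_j` even and `λ_{j-1} > λ_j` (convention `λ_0 = ∞`). -/
def Pplus (l : ℕ → ℕ) : Set ℕ := {j | Odd j ∧ Even (l j) ∧ (j = 1 ∨ l (j - 1) > l j)}

/-- `P^-(λ)`: even `j ≥ 2` with `λ_j` even and `λ_j > λ_{j+1}`. -/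
def Pminus (l : ℕ → ℕ) : Set ℕ := {j | 2 ≤ j ∧ Even j ∧ Even (l j) ∧ l j > l (j + 1)}

/-- `Q^+(λ)`: even `j ≥ 2` with `λ_j` odd and `λ_{j-1} > λ_j`. -/
def Qplus (l : ℕ → ℕ) : Set ℕ := {j | 2 ≤ j ∧ Even j ∧ Odd (l j) ∧ l (j - 1) > l j}

/-- `Q^-(λ)`: odd `j ≥ 1` with `λ_j` odd and `λ_j > λ_{j+1}`. -/
def Qminus (l : ℕ → ℕ) : Set ℕ := {j | Odd j ∧ Odd (l j) ∧ l j > l (j + 1)}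

/-- Orthogonal version of `P^+`: odd `j` with `λ_j` odd and `λ_{j-1} > λ_j` (`λ_0 = ∞`). -/
def PplusO (l : ℕ → ℕ) : Set ℕ := {j | Odd j ∧ Odd (l j) ∧ (j = 1 ∨ l (j - 1) > l j)}

/-- Orthogonal version of `P^-`: even `j ≥ 2` with `λ_j` odd and `λ_j > λ_{j+1}`. -/
def PminusO (l : ℕ → ℕ) : Set ℕ := {j | 2 ≤ j ∧ Even j ∧ Odd (l j) ∧ l j > l (j + 1)}

/-- The sequence `s(λ)`: `1` on `Q^+`, `-1` on `Q^-`, `0` elsewhere. -/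
def sSeq (l : ℕ → ℕ) (j : ℕ) : ℤ :=
  if j ∈ Qplus l then 1 else if j ∈ Qminus l then -1 else 0

/-- The sequence `ζ(λ)`: `1` on `P^+`, `-1` on `P^-`, `0` elsewhere. -/
def zSeq (l : ℕ → ℕ) (j : ℕ) : ℤ :=
  if j ∈ Pplus l then 1 else if j ∈ Pminus l then -1 else 0

/-- Orthogonal `ζ(λ)`: `1` on `PplusO`, `-1` on `PminusO`, `0` elsewhere. -/
def zSeqO (l : ℕ → ℕ) (j : ℕ) : ℤ :=
  if j ∈ PplusO l then 1 else if j ∈ PminusO l then -1 else 0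

/-- `sp(λ) = λ + s(λ)` (termwise, truncated to ℕ). -/
def spPart (l : ℕ → ℕ) (j : ℕ) : ℕ := ((l j : ℤ) + sSeq l j).toNat

/-- Dominance order on partitions. -/
def Dom (l m : ℕ → ℕ) : Prop :=
  ∀ k, ∑ j ∈ Finset.range k, l (j + 1) ≤ ∑ j ∈ Finset.range k, m (j + 1)

/-- `j_min(i)`: smallest index `j ≥ 1` with `l j = i`. -/
def jminPart (l : ℕ → ℕ) (i : ℕ) : ℕ := sInf {j | 1 ≤ j ∧ l j = i}

/-- `j_max(i)`: largest index `j ≥ 1` with `l j = i`. -/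
def jmaxPart (l : ℕ → ℕ) (i : ℕ) : ℕ := sSup {j | 1 ≤ j ∧ l j = i}

/-- `iSeq 1 > iSeq 2 > ... > iSeq t` enumerates the even positive parts of odd
multiplicity of the symplectic partition `l`, completed by a final `0` if their
number is odd (so that `t` is even). -/
def MarkedSeq (l : ℕ → ℕ) (iSeq : ℕ → ℕ) (t : ℕ) : Prop :=
  Even t ∧
  (∀ h h', 1 ≤ h → h < h' → h' ≤ t → iSeq h' < iSeq h) ∧
  (∀ h, 1 ≤ h → h ≤ t → Even (iSeq h)) ∧
  (∀ h, 1 ≤ h → h ≤ t → iSeq h ≠ 0 → Odd (mult l (iSeq h))) ∧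
  (∀ i, 0 < i → Even i → Odd (mult l i) → ∃ h, 1 ≤ h ∧ h ≤ t ∧ iSeq h = i)

/-- Orthogonal analogue: `iSeq` enumerates the odd parts of odd multiplicity. -/
def MarkedSeqO (l : ℕ → ℕ) (iSeq : ℕ → ℕ) (t : ℕ) : Prop :=
  Even t ∧
  (∀ h h', 1 ≤ h → h < h' → h' ≤ t → iSeq h' < iSeq h) ∧
  (∀ h, 1 ≤ h → h ≤ t → Odd (iSeq h)) ∧
  (∀ h, 1 ≤ h → h ≤ t → Odd (mult l (iSeq h))) ∧
  (∀ i, Odd i → Odd (mult l i) → ∃ h, 1 ≤ h ∧ h ≤ t ∧ iSeq h = i)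

/-- `i` lies in the range `[i_{2h}, i_{2h-1}]` for some `h`. -/
def InRange (iSeq : ℕ → ℕ) (t : ℕ) (i : ℕ) : Prop :=
  ∃ h, 1 ≤ h ∧ 2 * h ≤ t ∧ iSeq (2 * h) ≤ i ∧ i ≤ iSeq (2 * h - 1)

/-- Intervals of a (special symplectic) partition `l`, relative to the marked
sequence `iSeq` of length `t`. -/
def IsItv (l : ℕ → ℕ) (iSeq : ℕ → ℕ) (t : ℕ) (Δ : Set ℕ) : Prop :=
  (∃ h, 1 ≤ h ∧ 2 * h ≤ t ∧
      Δ = {i | (i = 0 ∨ 0 < mult l i) ∧ iSeq (2 * h) ≤ i ∧ i ≤ iSeq (2 * h - 1)}) ∨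
  (∃ i, Even i ∧ (i = 0 ∨ 0 < mult l i) ∧ ¬ InRange iSeq t i ∧ Δ = {i})

/-- Intervals of a (special orthogonal, even) partition `l`. -/
def IsItvO (l : ℕ → ℕ) (iSeq : ℕ → ℕ) (t : ℕ) (Δ : Set ℕ) : Prop :=
  (∃ h, 1 ≤ h ∧ 2 * h ≤ t ∧
      Δ = {i | 0 < mult l i ∧ iSeq (2 * h) ≤ i ∧ i ≤ iSeq (2 * h - 1)}) ∨
  (∃ i, Odd i ∧ 0 < mult l i ∧ ¬ InRange iSeq t i ∧ Δ = {i})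

/-- `J(Δ)`: the set of indices `j ≥ 1` whose part lies in `Δ`. -/
def idxSet (l : ℕ → ℕ) (Δ : Set ℕ) : Set ℕ := {j | 1 ≤ j ∧ l j ∈ Δ}

/-- Good parity at index `j`: `λ_{1,j}` even and `λ_{2,j}` odd. -/
def GoodIdx (l₁ l₂ : ℕ → ℕ) (j : ℕ) : Prop := Even (l₁ j) ∧ Odd (l₂ j)

/-- `J^+`: odd `j` of good parity with a strict decrease at `j-1 → j` for some `d`. -/
def Jplus (l₁ l₂ : ℕ → ℕ) : Set ℕ :=
  {j | Odd j ∧ GoodIdx l₁ l₂ j ∧ (j = 1 ∨ l₁ (j - 1) > l₁ j ∨ l₂ (j - 1) > l₂ j)}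

/-- `J^-`: even `j` of good parity with a strict decrease at `j → j+1` for some `d`. -/
def Jminus (l₁ l₂ : ℕ → ℕ) : Set ℕ :=
  {j | 2 ≤ j ∧ Even j ∧ GoodIdx l₁ l₂ j ∧ (l₁ j > l₁ (j + 1) ∨ l₂ j > l₂ (j + 1))}

/-- The sequence `ξ`: `1` on `J^+`, `-1` on `J^-`, `0` elsewhere. -/
def xiSeq (l₁ l₂ : ℕ → ℕ) (j : ℕ) : ℤ :=
  if j ∈ Jplus l₁ l₂ then 1 else if j ∈ Jminus l₁ l₂ then -1 else 0

/-- The endoscopic induction `λ = λ₁ + λ₂ + ξ` (termwise, truncated to ℕ). -/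
def indPart (l₁ l₂ : ℕ → ℕ) (j : ℕ) : ℕ := ((l₁ j : ℤ) + (l₂ j : ℤ) + xiSeq l₁ l₂ j).toNat

lemma part_anti {l : ℕ → ℕ} (hpart : IsPartition l) :
    ∀ j j', 1 ≤ j → j ≤ j' → l j' ≤ l j := by
  intro j j' hj hjj
  induction j' with
  | zero => omega
  | succ n ih =>
    rcases Nat.lt_or_ge j (n+1) with h | h
    · have := hpart n (by omega)
      have := ih (by omega)
      omega
    · have : j = n + 1 := by omega
      simp [this]

lemma mult_eq_card {l : ℕ → ℕ} {N : ℕ} (hz : ∀ j, N ≤ j → l j = 0) {i : ℕ} (hi : 0 < i) :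
    mult l i = ((Finset.range N).filter (fun j => 1 ≤ j ∧ l j = i)).card := by
  have hset : {j : ℕ | 1 ≤ j ∧ l j = i}
      = ↑((Finset.range N).filter (fun j => 1 ≤ j ∧ l j = i)) := by
    ext j
    simp only [Set.mem_setOf_eq, Finset.coe_filter, Finset.mem_range]
    constructor
    · rintro ⟨h1, h2⟩
      refine ⟨?_, h1, h2⟩
      by_contra hc
      have := hz j (by omega)
      omega
    · rintro ⟨_, h1, h2⟩; exact ⟨h1, h2⟩
  rw [mult, hset, Nat.card_coe_set_eq, Set.ncard_coe_finset]

lemma exists_idx_of_mult_ne {l : ℕ → ℕ} {i : ℕ} (h : mult l i ≠ 0) : ∃ j, 1 ≤ j ∧ l j = i := by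
  rw [mult] at h
  have : Nonempty {j : ℕ | 1 ≤ j ∧ l j = i} := (Nat.card_ne_zero.mp h).1
  obtain ⟨⟨j, hj⟩⟩ := this
  exact ⟨j, hj⟩

lemma mult_pos_of {l : ℕ → ℕ} (hz : EventuallyZero l) {i j : ℕ} (hj : 1 ≤ j) (hij : l j = i)
    (hi : 0 < i) : 0 < mult l i := by
  obtain ⟨N, hN⟩ := hz
  rw [mult_eq_card hN hi]
  refine Finset.card_pos.mpr ⟨j, ?_⟩
  simp only [Finset.mem_filter, Finset.mem_range]
  refine ⟨?_, hj, hij⟩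
  by_contra hc
  have := hN j (by omega)
  omega

lemma part_mem {l : ℕ → ℕ} (hz : EventuallyZero l) {j : ℕ} (hj : 1 ≤ j) :
    l j = 0 ∨ 0 < mult l (l j) := by
  rcases Nat.eq_zero_or_pos (l j) with h | h
  · exact Or.inl h
  · exact Or.inr (mult_pos_of hz hj rfl h)

lemma countG {l : ℕ → ℕ} {N : ℕ} (hpart : IsPartition l) (hz : ∀ j, N ≤ j → l j = 0)
    {i j : ℕ} (hj : 1 ≤ j) (hle : l j ≤ i) (hdrop : j = 1 ∨ i < l (j - 1)) :
    ((Finset.range N).filter (fun j' => 1 ≤ j' ∧ i < l j')).card = j - 1 := by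
  have : (Finset.range N).filter (fun j' => 1 ≤ j' ∧ i < l j') = Finset.Icc 1 (j - 1) := by
    ext j'
    simp only [Finset.mem_filter, Finset.mem_range, Finset.mem_Icc]
    constructor
    · rintro ⟨hN', h1, hgt⟩
      have : j' < j := by
        by_contra hc
        have := part_anti hpart j j' hj (by omega)
        omega
      omega
    · rintro ⟨h1, h2⟩
      have hj2 : 2 ≤ j := by omega
      have hd : i < l (j - 1) := by rcases hdrop with h | h; omega; exact h
      have : l (j - 1) ≤ l j' := part_anti hpart j' (j - 1) h1 (by omega)
      refine ⟨?_, h1, by omega⟩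
      by_contra hc
      have := hz j' (by omega)
      omega
  rw [this, Nat.card_Icc]; omega

lemma countG' {l : ℕ → ℕ} {N : ℕ} (hpart : IsPartition l) (hz : ∀ j, N ≤ j → l j = 0)
    {i j : ℕ} (hj : 1 ≤ j) (hi : 1 ≤ i) (hge : i ≤ l j) (hlt : l (j + 1) < i) :
    ((Finset.range N).filter (fun j' => 1 ≤ j' ∧ i ≤ l j')).card = j := by
  have : (Finset.range N).filter (fun j' => 1 ≤ j' ∧ i ≤ l j') = Finset.Icc 1 j := by
    ext j'
    simp only [Finset.mem_filter, Finset.mem_range, Finset.mem_Icc]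
    constructor
    · rintro ⟨hN', h1, hgt⟩
      refine ⟨h1, ?_⟩
      by_contra hc
      have := part_anti hpart (j + 1) j' (by omega) (by omega)
      omega
    · rintro ⟨h1, h2⟩
      have : l j ≤ l j' := part_anti hpart j' j h1 h2
      refine ⟨?_, h1, by omega⟩
      by_contra hc
      have := hz j' (by omega)
      omega
  rw [this, Nat.card_Icc]; omega

lemma countG'_split {l : ℕ → ℕ} {N : ℕ} (hz : ∀ j, N ≤ j → l j = 0) {i : ℕ} (hi : 0 < i) :
    ((Finset.range N).filter (fun j' => 1 ≤ j' ∧ i ≤ l j')).card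
      = ((Finset.range N).filter (fun j' => 1 ≤ j' ∧ i < l j')).card + mult l i := by
  rw [mult_eq_card hz hi]
  rw [← Finset.card_union_of_disjoint]
  · congr 1
    ext j'
    simp only [Finset.mem_filter, Finset.mem_range, Finset.mem_union]
    omega
  · rw [Finset.disjoint_left]
    intro a ha hb
    simp only [Finset.mem_filter, Finset.mem_range] at ha hb
    omega

lemma iSeq_anti {l iSeq : ℕ → ℕ} {t : ℕ} (hmark : MarkedSeq l iSeq t)
    {h h' : ℕ} (h1 : 1 ≤ h) (hhh : h ≤ h') (ht : h' ≤ t) : iSeq h' ≤ iSeq h := by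
  rcases Nat.eq_or_lt_of_le hhh with rfl | hlt
  · exact le_refl _
  · exact le_of_lt (hmark.2.1 h h' h1 hlt ht)

lemma parityG {l iSeq : ℕ → ℕ} {t N : ℕ} (hpart : IsPartition l) (hz : ∀ j, N ≤ j → l j = 0)
    (hsymp : IsSymplectic l) (hmark : MarkedSeq l iSeq t) (i : ℕ) :
    ((Finset.range N).filter (fun j' => 1 ≤ j' ∧ i < l j')).card % 2
      = ((Finset.Icc 1 t).filter (fun h => i < iSeq h)).card % 2 := by
  set G := (Finset.range N).filter (fun j' => 1 ≤ j' ∧ i < l j') with hG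
  have hcard : G.card = ∑ v ∈ G.image l, (G.filter (fun j => l j = v)).card :=
    Finset.card_eq_sum_card_fiberwise (fun x hx => Finset.mem_image_of_mem l hx)
  have hfiber : ∀ v ∈ G.image l, (G.filter (fun j => l j = v)).card = mult l v := by
    intro v hv
    obtain ⟨j0, hj0, hj0v⟩ := Finset.mem_image.mp hv
    simp only [hG, Finset.mem_filter, Finset.mem_range] at hj0
    have hvi : i < v := by omega
    rw [mult_eq_card hz (by omega)]
    congr 1
    ext j'
    simp only [hG, Finset.mem_filter, Finset.mem_range]
    constructor
    · rintro ⟨⟨a, b, c⟩, d⟩; exact ⟨a, b, d⟩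
    · rintro ⟨a, b, c⟩; exact ⟨⟨a, b, by omega⟩, c⟩
  rw [hcard, Finset.sum_congr rfl hfiber, Finset.sum_nat_mod]
  have hterm : ∀ v ∈ G.image l, mult l v % 2 = if Odd (mult l v) then 1 else 0 := by
    intro v _
    rcases Nat.even_or_odd (mult l v) with h | h
    · simp [h, Nat.even_iff.mp h, Nat.not_odd_iff_even.mpr h]
    · simp [h, Nat.odd_iff.mp h]
  rw [Finset.sum_congr rfl hterm, ← Finset.card_filter]
  -- identify the two filters
  have hsets : (G.image l).filter (fun v => Odd (mult l v))
      = ((Finset.Icc 1 t).filter (fun h => i < iSeq h)).image iSeq := by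
    ext v
    simp only [Finset.mem_filter, Finset.mem_image, Finset.mem_Icc]
    constructor
    · rintro ⟨hv, hodd⟩
      obtain ⟨j0, hj0, hj0v⟩ := hv
      simp only [hG, Finset.mem_filter, Finset.mem_range] at hj0
      have hvpos : 0 < v := by omega
      have hveven : Even v := by
        by_contra hc
        have := hsymp v (Nat.not_even_iff_odd.mp hc)
        exact (Nat.not_odd_iff_even.mpr this) hodd
      obtain ⟨h, h1, h2, h3⟩ := hmark.2.2.2.2 v hvpos hveven hodd
      exact ⟨h, ⟨⟨h1, h2⟩, by omega⟩, h3⟩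
    · rintro ⟨h, ⟨⟨h1, h2⟩, hgt⟩, rfl⟩
      have hne : iSeq h ≠ 0 := by omega
      have hodd := hmark.2.2.2.1 h h1 h2 hne
      have hmne : mult l (iSeq h) ≠ 0 := by
        intro hc; rw [hc] at hodd; simp [Nat.odd_iff] at hodd
      obtain ⟨j0, hj01, hj0v⟩ := exists_idx_of_mult_ne hmne
      refine ⟨⟨j0, ?_, hj0v⟩, hodd⟩
      simp only [hG, Finset.mem_filter, Finset.mem_range]
      refine ⟨?_, hj01, by omega⟩
      by_contra hc
      have := hz j0 (by omega)
      omega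
  have hinj : Set.InjOn iSeq ↑((Finset.Icc 1 t).filter (fun h => i < iSeq h)) := by
    intro a ha b hb hab
    simp only [Finset.mem_coe, Finset.mem_filter, Finset.mem_Icc] at ha hb
    rcases lt_trichotomy a b with h | h | h
    · exact absurd hab (by have := hmark.2.1 a b ha.1.1 h hb.1.2; omega)
    · exact h
    · exact absurd hab (by have := hmark.2.1 b a hb.1.1 h ha.1.2; omega)
  rw [hsets, Finset.card_image_of_injOn hinj]

lemma iSeq_char {l iSeq : ℕ → ℕ} {t : ℕ} (hmark : MarkedSeq l iSeq t) (i : ℕ)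
    {h : ℕ} (h1 : 1 ≤ h) (ht : h ≤ t) :
    i < iSeq h ↔ h ≤ ((Finset.Icc 1 t).filter (fun h' => i < iSeq h')).card := by
  set T := (Finset.Icc 1 t).filter (fun h' => i < iSeq h') with hT
  constructor
  · intro hlt
    have hsub : Finset.Icc 1 h ⊆ T := by
      intro h'' hh
      simp only [Finset.mem_Icc] at hh
      simp only [hT, Finset.mem_filter, Finset.mem_Icc]
      have : iSeq h ≤ iSeq h'' := iSeq_anti hmark hh.1 hh.2 ht
      exact ⟨⟨hh.1, by omega⟩, by omega⟩
    have := Finset.card_le_card hsub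
    rw [Nat.card_Icc] at this
    omega
  · intro hle
    by_contra hc
    have hsub : T ⊆ Finset.Icc 1 (h - 1) := by
      intro h'' hh
      simp only [hT, Finset.mem_filter, Finset.mem_Icc] at hh
      simp only [Finset.mem_Icc]
      refine ⟨hh.1.1, ?_⟩
      by_contra hc2
      have : iSeq h'' ≤ iSeq h := iSeq_anti hmark h1 (by omega) hh.1.2
      omega
    have := Finset.card_le_card hsub
    rw [Nat.card_Icc] at this
    omega

lemma N_le_t {l iSeq : ℕ → ℕ} {t : ℕ} (hmark : MarkedSeq l iSeq t) (i : ℕ) :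
    ((Finset.Icc 1 t).filter (fun h' => i < iSeq h')).card ≤ t := by
  calc ((Finset.Icc 1 t).filter (fun h' => i < iSeq h')).card
      ≤ (Finset.Icc 1 t).card := Finset.card_filter_le _ _
    _ = t := by rw [Nat.card_Icc]; omega

lemma N_iSeq {l iSeq : ℕ → ℕ} {t : ℕ} (hmark : MarkedSeq l iSeq t)
    {k : ℕ} (h1 : 1 ≤ k) (hk : k ≤ t) :
    ((Finset.Icc 1 t).filter (fun h' => iSeq k < iSeq h')).card = k - 1 := by
  have : (Finset.Icc 1 t).filter (fun h' => iSeq k < iSeq h') = Finset.Icc 1 (k - 1) := by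
    ext h'
    simp only [Finset.mem_filter, Finset.mem_Icc]
    constructor
    · rintro ⟨⟨a, b⟩, c⟩
      refine ⟨a, ?_⟩
      by_contra hc
      have : iSeq h' ≤ iSeq k := iSeq_anti hmark h1 (by omega) b
      omega
    · rintro ⟨a, b⟩
      exact ⟨⟨a, by omega⟩, hmark.2.1 h' k a (by omega) hk⟩
  rw [this, Nat.card_Icc]
  omega

lemma even_N_of_not_inRange {l iSeq : ℕ → ℕ} {t : ℕ} (hmark : MarkedSeq l iSeq t) {i : ℕ}
    (h : ¬ InRange iSeq t i) :
    ((Finset.Icc 1 t).filter (fun h' => i < iSeq h')).card % 2 = 0 := by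
  by_contra hc
  set k := ((Finset.Icc 1 t).filter (fun h' => i < iSeq h')).card with hk
  have hk2 : k % 2 = 1 := by omega
  have hkt : k ≤ t := N_le_t hmark i
  have ht2 : t % 2 = 0 := Nat.even_iff.mp hmark.1
  have hk1 : 1 ≤ k := by omega
  have hklt : k + 1 ≤ t := by omega
  obtain ⟨h', hh'⟩ : ∃ h', 2 * h' = k + 1 := ⟨(k + 1) / 2, by omega⟩
  apply h
  refine ⟨h', by omega, by omega, ?_, ?_⟩
  · -- iSeq (2 h') = iSeq (k+1) ≤ i
    have := (iSeq_char hmark i (h := k + 1) (by omega) hklt)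
    rw [hh']
    omega
  · have := (iSeq_char hmark i (h := k) hk1 (by omega)).mpr le_rfl
    have heq : 2 * h' - 1 = k := by omega
    rw [heq]
    omega

lemma top_of_even_N {l iSeq : ℕ → ℕ} {t : ℕ} (hmark : MarkedSeq l iSeq t) {i : ℕ}
    (hN : ((Finset.Icc 1 t).filter (fun h' => i < iSeq h')).card % 2 = 0)
    (hr : InRange iSeq t i) :
    ∃ h, 1 ≤ h ∧ 2 * h ≤ t ∧ i = iSeq (2 * h - 1) := by
  obtain ⟨h, h1, hht, hbi, hia⟩ := hr
  rcases Nat.eq_or_lt_of_le hia with heq | hlt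
  · exact ⟨h, h1, hht, heq⟩
  · exfalso
    have h2h1 := (iSeq_char hmark i (h := 2 * h - 1) (by omega) (by omega)).mp hlt
    have h2h := (iSeq_char hmark i (h := 2 * h) (by omega) hht).mpr (by omega)
    omega

lemma inRange_iSeq {l iSeq : ℕ → ℕ} {t : ℕ} (hmark : MarkedSeq l iSeq t)
    {k : ℕ} (h1 : 1 ≤ k) (hk : k ≤ t) : InRange iSeq t (iSeq k) := by
  rcases Nat.even_or_odd k with he | ho
  · have hk2 : k % 2 = 0 := Nat.even_iff.mp he
    obtain ⟨h, hh⟩ : ∃ h, 2 * h = k := ⟨k / 2, by omega⟩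
    refine ⟨h, by omega, by omega, by rw [hh], ?_⟩
    have hlt : iSeq k < iSeq (k - 1) := hmark.2.1 (k - 1) k (by omega) (by omega) hk
    have heq : 2 * h - 1 = k - 1 := by omega
    rw [heq]
    omega
  · have ht2 : t % 2 = 0 := Nat.even_iff.mp hmark.1
    have hko : k % 2 = 1 := Nat.odd_iff.mp ho
    have hkt : k + 1 ≤ t := by omega
    obtain ⟨h, hh⟩ : ∃ h, 2 * h = k + 1 := ⟨(k + 1) / 2, by omega⟩
    refine ⟨h, by omega, by omega, ?_, ?_⟩
    · have hlt : iSeq (k + 1) < iSeq k := hmark.2.1 k (k + 1) (by omega) (by omega) hkt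
      rw [hh]
      omega
    · have heq : 2 * h - 1 = k := by omega
      rw [heq]

/-- for a special symplectic partition `λ`, the minima `j_min(Δ)` of
the intervals of `λ` are exactly the odd `j` with `λ_j` even and `λ_{j-1} > λ_j`,
and the maxima `j_max(Δ)` over non-minimal intervals are exactly the even `j` with
`λ_j` even and `λ_j > λ_{j+1}`. -/
theorem interval_extremes (m : ℕ) (l iSeq : ℕ → ℕ) (t : ℕ)
    (hpart : IsPartition l) (hzero : EventuallyZero l) (hsum : psum l = 2 * m)
    (hsymp : IsSymplectic l) (hspec : IsSpecial l) (hmark : MarkedSeq l iSeq t) :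
    {j | ∃ Δ, IsItv l iSeq t Δ ∧ IsLeast (idxSet l Δ) j} = Pplus l ∧
    {j | ∃ Δ, IsItv l iSeq t Δ ∧ 0 ∉ Δ ∧ IsGreatest (idxSet l Δ) j} = Pminus l := by
  obtain ⟨N, hN⟩ := hzero
  have hzero' : EventuallyZero l := ⟨N, hN⟩
  constructor
  · ext j
    simp only [Set.mem_setOf_eq, Pplus]
    constructor
    · rintro ⟨Δ, hΔ, ⟨hj1, hjΔ⟩, hlb⟩
      rcases hΔ with ⟨h, hh1, hht, rfl⟩ | ⟨i, hie, him, hir, rfl⟩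
      · obtain ⟨hjm, hjb, hja⟩ := hjΔ
        have hba : iSeq (2 * h) < iSeq (2 * h - 1) :=
          hmark.2.1 (2 * h - 1) (2 * h) (by omega) (by omega) hht
        have haev : Even (iSeq (2 * h - 1)) := hmark.2.2.1 (2 * h - 1) (by omega) (by omega)
        have hamo : Odd (mult l (iSeq (2 * h - 1))) :=
          hmark.2.2.2.1 (2 * h - 1) (by omega) (by omega) (by omega)
        have hamne : mult l (iSeq (2 * h - 1)) ≠ 0 := by
          intro hc; rw [hc] at hamo; simp [Nat.odd_iff] at hamo
        obtain ⟨j0, hj01, hj0a⟩ := exists_idx_of_mult_ne hamne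
        have hj0mem : j0 ∈ idxSet l {i | (i = 0 ∨ 0 < mult l i) ∧
            iSeq (2 * h) ≤ i ∧ i ≤ iSeq (2 * h - 1)} :=
          ⟨hj01, Or.inr (by rw [hj0a]; omega), by omega, by omega⟩
        have hjle : j ≤ j0 := hlb hj0mem
        have hja' : iSeq (2 * h - 1) ≤ l j := by
          have := part_anti hpart j j0 hj1 hjle; omega
        have hlja : l j = iSeq (2 * h - 1) := by omega
        have hdrop : j = 1 ∨ l j < l (j - 1) := by
          by_cases hj1' : j = 1
          · exact Or.inl hj1'
          · right
            have hmono : l j ≤ l (j - 1) := part_anti hpart (j - 1) j (by omega) (by omega)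
            rcases Nat.eq_or_lt_of_le hmono with heq | hlt
            · exfalso
              have hmem : j - 1 ∈ idxSet l {i | (i = 0 ∨ 0 < mult l i) ∧
                  iSeq (2 * h) ≤ i ∧ i ≤ iSeq (2 * h - 1)} :=
                ⟨by omega, part_mem hzero' (by omega : 1 ≤ j - 1), by omega, by omega⟩
              have := hlb hmem
              omega
            · exact hlt
        have hcount := countG hpart hN hj1 (le_of_eq hlja)
          (by rcases hdrop with h' | h'; exact Or.inl h'; exact Or.inr (by omega))
        have hpar := parityG hpart hN hsymp hmark (iSeq (2 * h - 1))
        have hNa := N_iSeq hmark (k := 2 * h - 1) (by omega) (by omega)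
        refine ⟨Nat.odd_iff.mpr (by omega), by rw [hlja]; exact haev, ?_⟩
        rcases hdrop with h' | h'
        · exact Or.inl h'
        · exact Or.inr h'
      · have hlji : l j = i := hjΔ
        have hdrop : j = 1 ∨ l j < l (j - 1) := by
          by_cases hj1' : j = 1
          · exact Or.inl hj1'
          · right
            have hmono : l j ≤ l (j - 1) := part_anti hpart (j - 1) j (by omega) (by omega)
            rcases Nat.eq_or_lt_of_le hmono with heq | hlt
            · exfalso
              have hmem : j - 1 ∈ idxSet l {i} :=
                ⟨by omega, by simp only [Set.mem_singleton_iff]; omega⟩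
              have := hlb hmem
              omega
            · exact hlt
        have hcount := countG hpart hN hj1 (le_of_eq hlji)
          (by rcases hdrop with h' | h'; exact Or.inl h'; exact Or.inr (by omega))
        have hpar := parityG hpart hN hsymp hmark i
        have hNa := even_N_of_not_inRange hmark hir
        refine ⟨Nat.odd_iff.mpr (by omega), by rw [hlji]; exact hie, ?_⟩
        rcases hdrop with h' | h'
        · exact Or.inl h'
        · exact Or.inr h'
    · rintro ⟨hjodd, hjev, hjdrop⟩
      have hj1 : 1 ≤ j := by have := Nat.odd_iff.mp hjodd; omega
      have hcount := countG hpart hN hj1 (le_refl (l j))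
        (by rcases hjdrop with h' | h'; exact Or.inl h'; exact Or.inr h')
      have hpar := parityG hpart hN hsymp hmark (l j)
      have hNev : ((Finset.Icc 1 t).filter (fun h' => l j < iSeq h')).card % 2 = 0 := by
        have := Nat.odd_iff.mp hjodd; omega
      by_cases hr : InRange iSeq t (l j)
      · obtain ⟨h, hh1, hht, htop⟩ := top_of_even_N hmark hNev hr
        refine ⟨{i | (i = 0 ∨ 0 < mult l i) ∧ iSeq (2 * h) ≤ i ∧ i ≤ iSeq (2 * h - 1)},
          Or.inl ⟨h, hh1, hht, rfl⟩, ⟨hj1, part_mem hzero' hj1, ?_, le_of_eq htop⟩, ?_⟩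
        · have hba : iSeq (2 * h) < iSeq (2 * h - 1) :=
            hmark.2.1 (2 * h - 1) (2 * h) (by omega) (by omega) hht
          omega
        · rintro j' ⟨hj'1, _, _, hj'a⟩
          by_contra hc
          have hj'j : j' ≤ j - 1 := by omega
          have hj2 : 2 ≤ j := by omega
          have hdrop' : l j < l (j - 1) := by rcases hjdrop with h' | h'; omega; exact h'
          have := part_anti hpart j' (j - 1) hj'1 hj'j
          rw [← htop] at hj'a
          omega
      · refine ⟨{l j}, Or.inr ⟨l j, hjev, part_mem hzero' hj1, hr, rfl⟩,
          ⟨hj1, rfl⟩, ?_⟩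
        rintro j' ⟨hj'1, hj'e⟩
        have hj'e2 : l j' = l j := hj'e
        by_contra hc
        have hj'j : j' ≤ j - 1 := by omega
        have hj2 : 2 ≤ j := by omega
        have hdrop' : l j < l (j - 1) := by rcases hjdrop with h' | h'; omega; exact h'
        have := part_anti hpart j' (j - 1) hj'1 hj'j
        omega
  · ext j
    simp only [Set.mem_setOf_eq, Pminus]
    constructor
    · rintro ⟨Δ, hΔ, h0, ⟨hj1, hjΔ⟩, hub⟩
      rcases hΔ with ⟨h, hh1, hht, rfl⟩ | ⟨i, hie, him, hir, rfl⟩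
      · obtain ⟨hjm, hjb, hja⟩ := hjΔ
        have hba : iSeq (2 * h) < iSeq (2 * h - 1) :=
          hmark.2.1 (2 * h - 1) (2 * h) (by omega) (by omega) hht
        have hbpos : 0 < iSeq (2 * h) := by
          by_contra hc
          exact h0 ⟨Or.inl rfl, by omega, by omega⟩
        have hbev : Even (iSeq (2 * h)) := hmark.2.2.1 (2 * h) (by omega) hht
        have hbmo : Odd (mult l (iSeq (2 * h))) :=
          hmark.2.2.2.1 (2 * h) (by omega) hht (by omega)
        have hbmne : mult l (iSeq (2 * h)) ≠ 0 := by
          intro hc; rw [hc] at hbmo; simp [Nat.odd_iff] at hbmo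
        obtain ⟨j0, hj01, hj0b⟩ := exists_idx_of_mult_ne hbmne
        have hj0mem : j0 ∈ idxSet l {i | (i = 0 ∨ 0 < mult l i) ∧
            iSeq (2 * h) ≤ i ∧ i ≤ iSeq (2 * h - 1)} :=
          ⟨hj01, Or.inr (by rw [hj0b]; omega), by omega, by omega⟩
        have hjge : j0 ≤ j := hub hj0mem
        have hjb' : l j ≤ iSeq (2 * h) := by
          have := part_anti hpart j0 j hj01 hjge; omega
        have hljb : l j = iSeq (2 * h) := by omega
        have hdrop : l (j + 1) < l j := by
          have hmono : l (j + 1) ≤ l j := hpart j hj1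
          rcases Nat.eq_or_lt_of_le hmono with heq | hlt
          · exfalso
            have hmem : j + 1 ∈ idxSet l {i | (i = 0 ∨ 0 < mult l i) ∧
                iSeq (2 * h) ≤ i ∧ i ≤ iSeq (2 * h - 1)} :=
              ⟨by omega, part_mem hzero' (by omega : 1 ≤ j + 1), by omega, by omega⟩
            have := hub hmem
            omega
          · exact hlt
        have hcount := countG' hpart hN hj1 (by omega : 1 ≤ iSeq (2 * h))
          (by omega) (by omega)
        have hsplit := countG'_split (l := l) hN (by omega : 0 < iSeq (2 * h))
        have hpar := parityG hpart hN hsymp hmark (iSeq (2 * h))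
        have hNb := N_iSeq hmark (k := 2 * h) (by omega) hht
        have hmodd := Nat.odd_iff.mp hbmo
        refine ⟨?_, Nat.even_iff.mpr (by omega), by rw [hljb]; exact hbev, by omega⟩
        omega
      · have hipos : 0 < i := by
          rcases Nat.eq_zero_or_pos i with hc | hc
          · exact absurd (by rw [hc]; rfl : (0 : ℕ) ∈ ({i} : Set ℕ)) h0
          · exact hc
        have hlji : l j = i := hjΔ
        have hmev : Even (mult l i) := by
          by_contra hc
          obtain ⟨k, hk1, hkt, hki⟩ := hmark.2.2.2.2 i hipos hie (Nat.not_even_iff_odd.mp hc)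
          exact hir (hki ▸ inRange_iSeq hmark hk1 hkt)
        have hdrop : l (j + 1) < l j := by
          have hmono : l (j + 1) ≤ l j := hpart j hj1
          rcases Nat.eq_or_lt_of_le hmono with heq | hlt
          · exfalso
            have hmem : j + 1 ∈ idxSet l {i} :=
              ⟨by omega, by simp only [Set.mem_singleton_iff]; omega⟩
            have := hub hmem
            omega
          · exact hlt
        have hcount := countG' hpart hN hj1 (by omega : 1 ≤ i) (by omega) (by omega)
        have hsplit := countG'_split (l := l) hN hipos
        have hpar := parityG hpart hN hsymp hmark i
        have hNa := even_N_of_not_inRange hmark hir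
        have hmev' := Nat.even_iff.mp hmev
        refine ⟨?_, Nat.even_iff.mpr (by omega), by rw [hlji]; exact hie, by omega⟩
        omega
    · rintro ⟨hj2, hjev, hljev, hjdrop⟩
      have hj1 : 1 ≤ j := by omega
      have hipos : 0 < l j := by omega
      have hcount := countG' hpart hN hj1 (by omega : 1 ≤ l j) (le_refl (l j)) hjdrop
      have hsplit := countG'_split (l := l) hN hipos
      have hpar := parityG hpart hN hsymp hmark (l j)
      have hjev' := Nat.even_iff.mp hjev
      rcases Nat.even_or_odd (mult l (l j)) with hme | hmo
      · have hme' := Nat.even_iff.mp hme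
        have hNev : ((Finset.Icc 1 t).filter (fun h' => l j < iSeq h')).card % 2 = 0 := by
          omega
        have hnr : ¬ InRange iSeq t (l j) := by
          intro hr
          obtain ⟨h, hh1, hht, htop⟩ := top_of_even_N hmark hNev hr
          have hodd : Odd (mult l (l j)) := by
            rw [htop]
            exact hmark.2.2.2.1 (2 * h - 1) (by omega) (by omega) (by omega)
          exact (Nat.not_even_iff_odd.mpr hodd) hme
        refine ⟨{l j}, Or.inr ⟨l j, hljev, Or.inr (mult_pos_of hzero' hj1 rfl hipos), hnr, rfl⟩,
          ?_, ⟨hj1, rfl⟩, ?_⟩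
        · simp only [Set.mem_singleton_iff]
          omega
        · rintro j' ⟨hj'1, hj'e⟩
          have hj'e2 : l j' = l j := hj'e
          by_contra hc
          have := part_anti hpart (j + 1) j' (by omega) (by omega)
          omega
      · have hmo' := Nat.odd_iff.mp hmo
        have hNodd : ((Finset.Icc 1 t).filter (fun h' => l j < iSeq h')).card % 2 = 1 := by
          omega
        obtain ⟨k, hk1, hkt, hki⟩ := hmark.2.2.2.2 (l j) hipos hljev hmo
        have hNk := N_iSeq hmark hk1 hkt
        rw [hki] at hNk
        have hkev : k % 2 = 0 := by omega
        obtain ⟨h, hh⟩ : ∃ h, 2 * h = k := ⟨k / 2, by omega⟩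
        have hba : iSeq (2 * h) < iSeq (2 * h - 1) :=
          hmark.2.1 (2 * h - 1) (2 * h) (by omega) (by omega) (by omega)
        have hbj : iSeq (2 * h) = l j := by rw [hh]; exact hki
        refine ⟨{i | (i = 0 ∨ 0 < mult l i) ∧ iSeq (2 * h) ≤ i ∧ i ≤ iSeq (2 * h - 1)},
          Or.inl ⟨h, by omega, by omega, rfl⟩, ?_,
          ⟨hj1, part_mem hzero' hj1, by omega, by omega⟩, ?_⟩
        · rintro ⟨_, hb0, _⟩
          omega
        · rintro j' ⟨hj'1, _, hj'b, _⟩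
          by_contra hc
          have := part_anti hpart (j + 1) j' (by omega) (by omega)
          omega
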